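/- If (M →^∂ N, ·, {−,−}) is a braided crossed module of Lie K-algebras, then the pair (Φ₁, Φ₂), with Φ₁(n ⊗ n') = {n,n'} and Φ₂(n ⊗ n') = [n,n'], is a morphism of braided crossed modules from (N ⊗ N →^Id N ⊗ N, [−,−], [−,−]) to (M →^∂ N, ·, {−,−}), and moreover ker(Φ₁) ⊆ (N ⊗ N)^(N⊗N) and ker(Φ₂) ⊆ Z_B(N ⊗ N). -/

import Mathlib

universe u

/-- The Lie bracket as a bilinear map. -/
def bracketMap (K : Type u) [CommRing K] (M : Type u) [LieRing M] [LieAlgebra K M] :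
    M →ₗ[K] M →ₗ[K] M :=
  LinearMap.mk₂ K (fun a b => ⁅a, b⁆) add_lie smul_lie lie_add lie_smul

/-- Axioms for a crossed module of Lie `K`-algebras `(d : M → N, act)`. -/
structure LieXMod (K : Type u) [CommRing K] (M N : Type u)
    [LieRing M] [LieAlgebra K M] [LieRing N] [LieAlgebra K N]
    (d : M →ₗ⁅K⁆ N) (act : N →ₗ[K] M →ₗ[K] M) : Prop where
  act_lie : ∀ n n' m, act ⁅n, n'⁆ m = act n (act n' m) - act n' (act n m)
  lie_act : ∀ n m m', act n ⁅m, m'⁆ = ⁅act n m, m'⁆ + ⁅m, act n m'⁆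
  equivar : ∀ n m, d (act n m) = ⁅n, d m⁆
  peiffer : ∀ m m', act (d m) m' = ⁅m, m'⁆

/-- Axioms `BLie1`–`BLie6` for a braiding on a crossed module of Lie algebras. -/
structure LieBraiding (K : Type u) [CommRing K] (M N : Type u)
    [LieRing M] [LieAlgebra K M] [LieRing N] [LieAlgebra K N]
    (d : M →ₗ⁅K⁆ N) (act : N →ₗ[K] M →ₗ[K] M)
    (br : N →ₗ[K] N →ₗ[K] M) : Prop where
  b1 : ∀ n n', d (br n n') = ⁅n, n'⁆
  b2 : ∀ m m', br (d m) (d m') = ⁅m, m'⁆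
  b3 : ∀ m n, br (d m) n = - act n m
  b4 : ∀ n m, br n (d m) = act n m
  b5 : ∀ n n' n'', br n ⁅n', n''⁆ = br ⁅n, n'⁆ n'' - br ⁅n, n''⁆ n'
  b6 : ∀ n n' n'', br ⁅n, n'⁆ n'' = br n ⁅n', n''⁆ - br n' ⁅n, n''⁆

/-- `T`, together with the bilinear pairing `t`, is the non-abelian tensor product
of the Lie algebras `A` and `B` acting on each other via `actAB` and `actBA`:
it satisfies the defining relations of the presentation and the universal property. -/
structure IsNATensor (K : Type u) [CommRing K] (A B : Type u)
    [LieRing A] [LieAlgebra K A] [LieRing B] [LieAlgebra K B]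
    (actAB : A →ₗ[K] B →ₗ[K] B) (actBA : B →ₗ[K] A →ₗ[K] A)
    (T : Type u) [LieRing T] [LieAlgebra K T]
    (t : A →ₗ[K] B →ₗ[K] T) : Prop where
  rel3a : ∀ a a' b, t ⁅a, a'⁆ b = t a (actAB a' b) - t a' (actAB a b)
  rel3b : ∀ a b b', t a ⁅b, b'⁆ = t (actBA b' a) b - t (actBA b a) b'
  rel4 : ∀ a b a' b', ⁅t a b, t a' b'⁆ = - t (actBA b a) (actAB a' b')
  lift : ∀ (C : Type u) [LieRing C] [LieAlgebra K C] (f : A →ₗ[K] B →ₗ[K] C),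
      (∀ a a' b, f ⁅a, a'⁆ b = f a (actAB a' b) - f a' (actAB a b)) →
      (∀ a b b', f a ⁅b, b'⁆ = f (actBA b' a) b - f (actBA b a) b') →
      (∀ a b a' b', ⁅f a b, f a' b'⁆ = - f (actBA b a) (actAB a' b')) →
      ∃! φ : T →ₗ⁅K⁆ C, ∀ a b, φ (t a b) = f a b

/-- `T` with pairing `t` is the non-abelian tensor square of `N` (adjoint actions). -/
def IsNATensorSq (K : Type u) [CommRing K] (N : Type u) [LieRing N] [LieAlgebra K N]
    (T : Type u) [LieRing T] [LieAlgebra K T] (t : N →ₗ[K] N →ₗ[K] T) : Prop :=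
  IsNATensor K N N (bracketMap K N) (bracketMap K N) T t

@[simp] lemma bracketMap_apply {K : Type u} [CommRing K] {M : Type u} [LieRing M]
    [LieAlgebra K M] (a b : M) : bracketMap K M a b = ⁅a, b⁆ := rfl

section Aux

variable {K : Type u} [CommRing K] {N T : Type u}
  [LieRing N] [LieAlgebra K N] [LieRing T] [LieAlgebra K T]
  {t : N →ₗ[K] N →ₗ[K] T}

/-- Two Lie algebra morphisms out of the non-abelian tensor square agreeing on the
generators are equal. -/
theorem IsNATensorSq.hom_ext (hT : IsNATensorSq K N T t)
    {C : Type u} [LieRing C] [LieAlgebra K C] (φ ψ : T →ₗ⁅K⁆ C)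
    (h : ∀ a b, φ (t a b) = ψ (t a b)) (x : T) : φ x = ψ x := by
  have hT' : IsNATensor K N N (bracketMap K N) (bracketMap K N) T t := hT
  obtain ⟨χ, hχ, hu⟩ := hT'.lift C (t.compr₂ ψ.toLinearMap)
    (by intro a a' b; simp [hT'.rel3a a a' b])
    (by intro a b b'; simp [hT'.rel3b a b b'])
    (by intro a b a' b'; simp [← LieHom.map_lie, hT'.rel4 a b a' b'])
  have h₁ : φ = χ := hu φ (by intro a b; simp [h a b])
  have h₂ : ψ = χ := hu ψ (by intro a b; simp)
  rw [h₁, h₂]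

/-- Any Lie subalgebra containing the image of `t` is the whole of `T`. -/
theorem IsNATensorSq.mem_of_gen (hT : IsNATensorSq K N T t)
    (S : LieSubalgebra K T) (hgen : ∀ a b, t a b ∈ S) (x : T) : x ∈ S := by
  have hT' : IsNATensor K N N (bracketMap K N) (bracketMap K N) T t := hT
  obtain ⟨ψ, hψ, -⟩ := hT'.lift S
    (LinearMap.mk₂ K (fun a b => (⟨t a b, hgen a b⟩ : S))
      (fun a a' b => Subtype.ext (by simp))
      (fun c a b => Subtype.ext
        (show t (c • a) b = c • t a b by rw [map_smul, LinearMap.smul_apply]))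
      (fun a b b' => Subtype.ext (by simp))
      (fun c a b => Subtype.ext
        (show t a (c • b) = c • t a b by rw [map_smul])))
    (by intro a a' b; exact Subtype.ext (by simpa using hT'.rel3a a a' b))
    (by intro a b b'; exact Subtype.ext (by simpa using hT'.rel3b a b b'))
    (by intro a b a' b'; exact Subtype.ext (by simpa using hT'.rel4 a b a' b'))
  have key : ∀ y : T, (S.incl.comp ψ) y = (LieHom.id : T →ₗ⁅K⁆ T) y :=
    hT.hom_ext _ _ (by intro a b; simp [hψ])
  have hx := key x
  simp only [LieHom.comp_apply, LieHom.coe_id, id_eq] at hx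
  rw [← hx]
  exact (ψ x).2

end Aux

theorem Phi_is_morphism_and_kernels_central (K : Type u) [CommRing K] (M N : Type u) [LieRing M] [LieAlgebra K M]
    [LieRing N] [LieAlgebra K N] (d : M →ₗ⁅K⁆ N) (act : N →ₗ[K] M →ₗ[K] M)
    (br : N →ₗ[K] N →ₗ[K] M) (hX : LieXMod K M N d act)
    (hB : LieBraiding K M N d act br)
    (T : Type u) [LieRing T] [LieAlgebra K T] (t : N →ₗ[K] N →ₗ[K] T)
    (hT : IsNATensorSq K N T t) (Φ₁ : T →ₗ⁅K⁆ M) (Φ₂ : T →ₗ⁅K⁆ N)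
    (hΦ₁ : ∀ n n' : N, Φ₁ (t n n') = br n n')
    (hΦ₂ : ∀ n n' : N, Φ₂ (t n n') = ⁅n, n'⁆) :
    (∀ x y : T, Φ₁ ⁅x, y⁆ = act (Φ₂ x) (Φ₁ y)) ∧
      (∀ x : T, d (Φ₁ x) = Φ₂ x) ∧
      (∀ x y : T, Φ₁ ⁅x, y⁆ = br (Φ₂ x) (Φ₂ y)) ∧
      (∀ x : T, Φ₁ x = 0 → ∀ y : T, ⁅y, x⁆ = 0) ∧
      (∀ x : T, Φ₂ x = 0 → ∀ y : T, ⁅x, y⁆ = 0 ∧ ⁅y, x⁆ = 0) := by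
  have hT' : IsNATensor K N N (bracketMap K N) (bracketMap K N) T t := hT
  -- Part 2: `d ∘ Φ₁ = Φ₂`.
  have h2 : ∀ x : T, d (Φ₁ x) = Φ₂ x := by
    have := hT.hom_ext (d.comp Φ₁) Φ₂
      (by intro a b; simp [hΦ₁, hΦ₂, hB.b1])
    intro x; simpa using this x
  -- Part 1: equivariance.
  have h1 : ∀ x y : T, Φ₁ ⁅x, y⁆ = act (Φ₂ x) (Φ₁ y) := by
    intro x y
    rw [LieHom.map_lie, ← hX.peiffer, h2]
  -- Part 3: compatibility with braidings.
  have h3 : ∀ x y : T, Φ₁ ⁅x, y⁆ = br (Φ₂ x) (Φ₂ y) := by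
    intro x y
    rw [← h2 y, hB.b4]
    exact h1 x y
  -- Key lemma: the bracket of `T` is given by `t` of the images under `Φ₂`.
  -- Stage 1: this holds when the first argument is a generator.
  have stage1 : ∀ y : T, ∀ a b : N, ⁅t a b, y⁆ = t ⁅a, b⁆ (Φ₂ y) := by
    intro y
    let S : LieSubalgebra K T :=
      { carrier := {y | ∀ a b : N, ⁅t a b, y⁆ = t ⁅a, b⁆ (Φ₂ y)}
        add_mem' := by
          intro y₁ y₂ hy₁ hy₂ a b
          simp only [Set.mem_setOf_eq] at hy₁ hy₂
          simp only [lie_add, hy₁ a b, hy₂ a b, map_add, map_add]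
        zero_mem' := by intro a b; simp [map_zero]
        smul_mem' := by
          intro c y₁ hy₁ a b
          simp only [Set.mem_setOf_eq] at hy₁
          simp only [lie_smul, hy₁ a b, map_smul, map_smul]
        lie_mem' := by
          intro y₁ y₂ hy₁ hy₂ a b
          simp only [Set.mem_setOf_eq] at hy₁ hy₂
          have e := hT'.rel3b ⁅a, b⁆ (Φ₂ y₁) (Φ₂ y₂)
          simp only [bracketMap_apply] at e
          rw [leibniz_lie, hy₁ a b, hy₂ ⁅a, b⁆ (Φ₂ y₁), hy₂ a b,
            ← lie_skew y₁ (t ⁅a, b⁆ (Φ₂ y₂)), hy₁ ⁅a, b⁆ (Φ₂ y₂),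
            LieHom.map_lie, e]
          rw [← lie_skew (Φ₂ y₁) ⁅a, b⁆, ← lie_skew (Φ₂ y₂) ⁅a, b⁆]
          simp only [map_neg, LinearMap.neg_apply]
          abel }
    have hgen : ∀ a b : N, t a b ∈ S := by
      intro a b
      intro c e
      have h4 := hT'.rel4 c e a b
      simp only [bracketMap_apply] at h4
      rw [h4, hΦ₂, ← lie_skew e c, map_neg, LinearMap.neg_apply, neg_neg]
    exact hT.mem_of_gen S hgen y
  -- Stage 2: the bracket formula in general.
  have hbr : ∀ x y : T, ⁅x, y⁆ = t (Φ₂ x) (Φ₂ y) := by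
    intro x
    let S : LieSubalgebra K T :=
      { carrier := {x | ∀ y : T, ⁅x, y⁆ = t (Φ₂ x) (Φ₂ y)}
        add_mem' := by
          intro x₁ x₂ hx₁ hx₂ y
          simp only [Set.mem_setOf_eq] at hx₁ hx₂
          simp only [add_lie, hx₁ y, hx₂ y, map_add, map_add,
            LinearMap.add_apply]
        zero_mem' := by intro y; simp [map_zero]
        smul_mem' := by
          intro c x₁ hx₁ y
          simp only [Set.mem_setOf_eq] at hx₁
          simp only [smul_lie, hx₁ y, map_smul, map_smul,
            LinearMap.smul_apply]
        lie_mem' := by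
          intro x₁ x₂ hx₁ hx₂ y
          simp only [Set.mem_setOf_eq] at hx₁ hx₂
          have e := hT'.rel3a (Φ₂ x₁) (Φ₂ x₂) (Φ₂ y)
          simp only [bracketMap_apply] at e
          rw [lie_lie, hx₁ ⁅x₂, y⁆, hx₂ ⁅x₁, y⁆, LieHom.map_lie, LieHom.map_lie,
            LieHom.map_lie, e] }
    have hgen : ∀ a b : N, t a b ∈ S := by
      intro a b
      intro y
      rw [stage1 y a b, hΦ₂]
    exact hT.mem_of_gen S hgen x
  refine ⟨h1, h2, h3, ?_, ?_⟩
  · intro x hx y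
    have hx2 : Φ₂ x = 0 := by rw [← h2, hx, map_zero]
    rw [hbr y x, hx2, map_zero]
  · intro x hx y
    constructor
    · rw [hbr x y, hx, map_zero, LinearMap.zero_apply]
    · rw [hbr y x, hx, map_zero]
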